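/- A tuple d ∈ ℝ_{≥0}^𝒦 belongs to the polyhedral TIN region P_id(𝒦) if and only if every directed circuit of the potential graph (with edge lengths determined by d and the channel strength levels) has nonnegative total length. -/

import Mathlib

open Finset

/-- The set of users `𝒦`: a cell `k : Fin K` together with a user index in `Fin (L k)`. -/
abbrev User {K : ℕ} (L : Fin K → ℕ) := (k : Fin K) × Fin (L k)

/-- The cyclically previous index in `Fin m` (i.e. `j - 1` modulo `m`). -/
def prevIdx {m : ℕ} (j : Fin m) : Fin m :=
  ⟨(j.val + (m - 1)) % m, Nat.mod_lt _ j.pos⟩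

/-- The cyclically next index in `Fin m` (i.e. `j + 1` modulo `m`). -/
def nextIdx {m : ℕ} (j : Fin m) : Fin m :=
  ⟨(j.val + 1) % m, Nat.mod_lt _ j.pos⟩

/-- The identity decoding order. -/
def idOrder {K : ℕ} (L : Fin K → ℕ) : (k : Fin K) → Equiv.Perm (Fin (L k)) :=
  fun _ => Equiv.refl _

/-- The term `max({0} ∪ {r_k^{[π_k(l')]} + α_{kk}^{[π_k(l')]} : l' < l, (π_k(l'),k) ∈ S}
∪ {r_j^{[l_j]} + α_{jk}^{[l_j]} : (l_j,j) ∈ S, j ≠ k})` in the polyhedral TIN constraints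
(expressed as a supremum of the corresponding finite nonempty set of reals). -/
noncomputable def innerMax {K : ℕ} (L : Fin K → ℕ)
    (α : (k : Fin K) → Fin (L k) → Fin K → ℝ)
    (π : (k : Fin K) → Equiv.Perm (Fin (L k)))
    (S : Set (User L)) (r : (k : Fin K) → Fin (L k) → ℝ)
    (k : Fin K) (l : Fin (L k)) : ℝ :=
  sSup (insert (0 : ℝ)
    ({x : ℝ | ∃ l' : Fin (L k), l' < l ∧ (⟨k, π k l'⟩ : User L) ∈ S ∧
        x = r k (π k l') + α k (π k l') k} ∪
     {x : ℝ | ∃ (j : Fin K) (lj : Fin (L j)), j ≠ k ∧ (⟨j, lj⟩ : User L) ∈ S ∧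
        x = r j lj + α j lj k}))

/-- The polyhedral TIN region `P_π(S)`: `d` is nonnegative, vanishes outside `S`, and is
realized by some power allocation `r ≤ 0` on `S`. -/
def polyTIN {K : ℕ} (L : Fin K → ℕ)
    (α : (k : Fin K) → Fin (L k) → Fin K → ℝ)
    (π : (k : Fin K) → Equiv.Perm (Fin (L k)))
    (S : Set (User L))
    (d : (k : Fin K) → Fin (L k) → ℝ) : Prop :=
  (∀ (k : Fin K) (l : Fin (L k)), 0 ≤ d k l) ∧
  (∀ (k : Fin K) (l : Fin (L k)), (⟨k, l⟩ : User L) ∉ S → d k l = 0) ∧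
  ∃ r : (k : Fin K) → Fin (L k) → ℝ,
    (∀ (k : Fin K) (l : Fin (L k)), (⟨k, l⟩ : User L) ∈ S → r k l ≤ 0) ∧
    (∀ (k : Fin K) (l : Fin (L k)), (⟨k, π k l⟩ : User L) ∈ S →
      d k (π k l) ≤ r k (π k l) + α k (π k l) k - innerMax L α π S r k l)

/-- The TIN-achievable region `P*_π` for decoding order `π`: as `P_π(𝒦)` but with the
positive part `max(0, ·)` of the upper bound. -/
def starTIN {K : ℕ} (L : Fin K → ℕ)
    (α : (k : Fin K) → Fin (L k) → Fin K → ℝ)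
    (π : (k : Fin K) → Equiv.Perm (Fin (L k)))
    (d : (k : Fin K) → Fin (L k) → ℝ) : Prop :=
  (∀ (k : Fin K) (l : Fin (L k)), 0 ≤ d k l) ∧
  ∃ r : (k : Fin K) → Fin (L k) → ℝ,
    (∀ (k : Fin K) (l : Fin (L k)), r k l ≤ 0) ∧
    (∀ (k : Fin K) (l : Fin (L k)),
      d k (π k l) ≤ max 0 (r k (π k l) + α k (π k l) k - innerMax L α π Set.univ r k l))

/-- The TIN cyclic system of GDoF inequalities for decoding order `π`:
(i) per-cell MAC-type bounds, and (ii) cyclic bounds over sequences of distinct cells. -/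
def cyclicSystem {K : ℕ} (L : Fin K → ℕ)
    (α : (k : Fin K) → Fin (L k) → Fin K → ℝ)
    (π : (k : Fin K) → Equiv.Perm (Fin (L k)))
    (d : (k : Fin K) → Fin (L k) → ℝ) : Prop :=
  (∀ (k : Fin K) (l : Fin (L k)),
      ∑ s ∈ Finset.Iic l, d k (π k s) ≤ α k (π k l) k) ∧
  (∀ m : ℕ, 2 ≤ m → m ≤ K → ∀ c : Fin m → Fin K, Function.Injective c →
    ∀ lsel : (j : Fin m) → Fin (L (c j)),
      ∑ j, (∑ s ∈ Finset.Iic (lsel j), d (c j) (π (c j) s)) ≤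
      ∑ j, (α (c j) (π (c j) (lsel j)) (c j) -
            α (c j) (π (c j) (lsel j)) (c (prevIdx j))))

/-- Edge lengths of the potential graph. Vertices are `Option (User L)`, with `none` the
ground node `v₀`. (The values on edges never traversed by a circuit of distinct vertices,
namely loops and `none → none`, are irrelevant.) -/
noncomputable def edgeLen {K : ℕ} (L : Fin K → ℕ)
    (α : (k : Fin K) → Fin (L k) → Fin K → ℝ)
    (d : (k : Fin K) → Fin (L k) → ℝ) :
    Option (User L) → Option (User L) → ℝ
  | none, _ => 0
  | some u, none => α u.1 u.2 u.1 - d u.1 u.2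
  | some u, some v =>
      if u.1 = v.1 then
        (if (u.2 : ℕ) < (v.2 : ℕ) then α u.1 u.2 u.1 - d u.1 u.2
         else α u.1 u.2 u.1 - α v.1 v.2 v.1 - d u.1 u.2)
      else α u.1 u.2 u.1 - α v.1 v.2 u.1 - d u.1 u.2





variable {β : Type*}

/-- Length of a forward path given edge lengths `e`. -/
def flen (e : β → β → ℝ) : List β → ℝ
  | [] => 0
  | [_] => 0
  | a :: b :: t => e a b + flen e (b :: t)

theorem flen_cons_cons (e : β → β → ℝ) (a b : β) (t : List β) :
    flen e (a :: b :: t) = e a b + flen e (b :: t) := rfl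

theorem flen_concat (e : β → β → ℝ) (a : β) (l : List β) (v : β) :
    flen e ((a :: l) ++ [v]) = flen e (a :: l) + e ((a :: l).getLast (by simp)) v := by
  induction l generalizing a with
  | nil => simp [flen]
  | cons b t ih =>
    have h := ih b
    simp only [List.cons_append] at h ⊢
    rw [flen_cons_cons, flen_cons_cons, h, List.getLast_cons (a := a) (by simp)]
    ring

theorem flen_split (e : β → β → ℝ) :
    ∀ (l₁ : List β) (b : β) (l₂ : List β),
      flen e (l₁ ++ b :: l₂) = flen e (l₁ ++ [b]) + flen e (b :: l₂) := by
  intro l₁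
  induction l₁ with
  | nil => intro b l₂; simp [flen]
  | cons a t ih =>
    intro b l₂
    cases t with
    | nil => simp [flen_cons_cons, flen]
    | cons c t' =>
      simp only [List.cons_append] at ih ⊢
      rw [flen_cons_cons, flen_cons_cons, ih b l₂]
      ring

theorem sum_flen (e : β → β → ℝ) : ∀ (a : β) (t : List β),
    ∑ j : Fin t.length, e ((a :: t).get j.castSucc) ((a :: t).get j.succ)
      = flen e (a :: t) := by
  intro a t
  induction t generalizing a with
  | nil => simp [flen]
  | cons b t ih =>
    show ∑ j : Fin (t.length + 1),
        e ((a :: b :: t).get j.castSucc) ((a :: b :: t).get j.succ) = _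
    rw [Fin.sum_univ_succ]
    have h0 : e ((a :: b :: t).get (0 : Fin (t.length + 1)).castSucc)
        ((a :: b :: t).get (0 : Fin (t.length + 1)).succ) = e a b := rfl
    rw [h0, flen_cons_cons, ← ih b]
    have : ∀ j : Fin t.length,
        e ((a :: b :: t).get j.succ.castSucc) ((a :: b :: t).get j.succ.succ)
          = e ((b :: t).get j.castSucc) ((b :: t).get j.succ) := by
      intro j
      congr 1
    rw [Finset.sum_congr rfl fun j _ => this j]
section InnerMaxFacts

variable {K : ℕ} {L : Fin K → ℕ} {α : (k : Fin K) → Fin (L k) → Fin K → ℝ}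
  {π : (k : Fin K) → Equiv.Perm (Fin (L k))} {S : Set (User L)}
  {r : (k : Fin K) → Fin (L k) → ℝ} {k : Fin K} {l : Fin (L k)}

theorem innerSet_finite :
    (insert (0 : ℝ)
      ({x : ℝ | ∃ l' : Fin (L k), l' < l ∧ (⟨k, π k l'⟩ : User L) ∈ S ∧
          x = r k (π k l') + α k (π k l') k} ∪
       {x : ℝ | ∃ (j : Fin K) (lj : Fin (L j)), j ≠ k ∧ (⟨j, lj⟩ : User L) ∈ S ∧
          x = r j lj + α j lj k})).Finite := by
  apply Set.Finite.insert
  apply Set.Finite.union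
  · apply (Set.finite_range fun l' : Fin (L k) => r k (π k l') + α k (π k l') k).subset
    rintro x ⟨l', _, _, rfl⟩
    exact ⟨l', rfl⟩
  · apply (Set.finite_range fun w : User L => r w.1 w.2 + α w.1 w.2 k).subset
    rintro x ⟨j, lj, _, _, rfl⟩
    exact ⟨⟨j, lj⟩, rfl⟩

theorem zero_le_innerMax : (0 : ℝ) ≤ innerMax L α π S r k l :=
  le_csSup innerSet_finite.bddAbove (Set.mem_insert _ _)

theorem le_innerMax₁ {l' : Fin (L k)} (h : l' < l) (hS : (⟨k, π k l'⟩ : User L) ∈ S) :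
    r k (π k l') + α k (π k l') k ≤ innerMax L α π S r k l :=
  le_csSup innerSet_finite.bddAbove
    (Set.mem_insert_iff.2 (Or.inr (Or.inl ⟨l', h, hS, rfl⟩)))

theorem le_innerMax₂ {j : Fin K} {lj : Fin (L j)} (h : j ≠ k)
    (hS : (⟨j, lj⟩ : User L) ∈ S) :
    r j lj + α j lj k ≤ innerMax L α π S r k l :=
  le_csSup innerSet_finite.bddAbove
    (Set.mem_insert_iff.2 (Or.inr (Or.inr ⟨j, lj, h, hS, rfl⟩)))

theorem innerMax_le {B : ℝ} (hb : (0 : ℝ) ≤ B)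
    (h1 : ∀ l' : Fin (L k), l' < l → (⟨k, π k l'⟩ : User L) ∈ S →
      r k (π k l') + α k (π k l') k ≤ B)
    (h2 : ∀ (j : Fin K) (lj : Fin (L j)), j ≠ k → (⟨j, lj⟩ : User L) ∈ S →
      r j lj + α j lj k ≤ B) :
    innerMax L α π S r k l ≤ B := by
  apply csSup_le ⟨0, Set.mem_insert _ _⟩
  rintro x hx
  rcases Set.mem_insert_iff.1 hx with rfl | hx
  · exact hb
  rcases hx with ⟨l', hl', hS, rfl⟩ | ⟨j, lj, hj, hS, rfl⟩
  · exact h1 l' hl' hS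
  · exact h2 j lj hj hS

end InnerMaxFacts


/-- **Lemma 1 (potential graph characterization).**
A nonnegative tuple `d` lies in the polyhedral TIN region `P_id(𝒦)` if and only if every
directed circuit of the potential graph, i.e. every cyclic sequence of `n ≥ 2` distinct
vertices, has nonnegative total length. -/
theorem polyTIN_iff_circuits_nonneg {K : ℕ} (hK : 1 ≤ K)
    (L : Fin K → ℕ) (hL : ∀ k, 1 ≤ L k)
    (α : (k : Fin K) → Fin (L k) → Fin K → ℝ)
    (hα : ∀ (k : Fin K) (l : Fin (L k)) (i : Fin K), 0 ≤ α k l i)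
    (hmono : ∀ k : Fin K, Monotone (fun l : Fin (L k) => α k l k))
    (d : (k : Fin K) → Fin (L k) → ℝ)
    (hd : ∀ (k : Fin K) (l : Fin (L k)), 0 ≤ d k l) :
    polyTIN L α (idOrder L) Set.univ d ↔
      (∀ n : ℕ, 2 ≤ n → ∀ v : Fin n → Option (User L), Function.Injective v →
        0 ≤ ∑ j, edgeLen L α d (v j) (v (nextIdx j))) := by
  constructor
  · rintro ⟨hd0, -, r, hr0, hcon⟩ n hn v hv
    haveI : NeZero n := ⟨by omega⟩
    have hn1 : 1 < n := by omega
    set p : Option (User L) → ℝ := fun o => o.elim 0 (fun w => r w.1 w.2) with hp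
    have hcon' : ∀ (k : Fin K) (l : Fin (L k)),
        d k l ≤ r k l + α k l k - innerMax L α (idOrder L) Set.univ r k l := by
      intro k l
      have h := hcon k l (Set.mem_univ _)
      simpa [idOrder] using h
    have key : ∀ u w : Option (User L), u ≠ w → p w ≤ p u + edgeLen L α d u w := by
      intro u w huw
      match u, w with
      | none, none => exact absurd rfl huw
      | none, some x =>
        have h := hr0 x.1 x.2 (Set.mem_univ _)
        simpa [p, edgeLen] using h
      | some x, none =>
        have h1 := hcon' x.1 x.2
        have h2 : (0:ℝ) ≤ innerMax L α (idOrder L) Set.univ r x.1 x.2 :=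
          zero_le_innerMax
        have hE : edgeLen L α d (some x) none = α x.1 x.2 x.1 - d x.1 x.2 := rfl
        have h3 := hd x.1 x.2
        simp only [hp, Option.elim]
        rw [hE]; linarith
      | some x, some y =>
        rcases x with ⟨k, lx⟩; rcases y with ⟨k', ly⟩
        by_cases hk : k = k'
        · subst hk
          have hne : lx ≠ ly := by
            intro h; exact huw (by rw [h])
          have h1 := hcon' k lx
          rcases Nat.lt_or_ge (lx : ℕ) (ly : ℕ) with hlt | hge
          · have hE : edgeLen L α d (some ⟨k, lx⟩) (some ⟨k, ly⟩)
                = α k lx k - d k lx := by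
              simp [edgeLen, hlt]
            have h2 : (0:ℝ) ≤ innerMax L α (idOrder L) Set.univ r k lx :=
              zero_le_innerMax
            have h3 := hr0 k ly (Set.mem_univ _)
            have h4 := hd k lx
            simp only [hp, Option.elim]
            rw [hE]; linarith
          · have hgt : (ly : ℕ) < (lx : ℕ) :=
              lt_of_le_of_ne hge (fun h => hne (Fin.ext h.symm))
            have hE : edgeLen L α d (some ⟨k, lx⟩) (some ⟨k, ly⟩)
                = α k lx k - α k ly k - d k lx := by
              simp [edgeLen, Nat.not_lt.2 (le_of_lt hgt)]
            have h4 : r k ly + α k ly k ≤ innerMax L α (idOrder L) Set.univ r k lx := by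
              have h5 := le_innerMax₁ (α := α) (π := idOrder L) (S := Set.univ)
                (r := r) (l := lx) (l' := ly) hgt (Set.mem_univ _)
              simpa [idOrder] using h5
            simp only [hp, Option.elim]
            rw [hE]; linarith
        · have hE : edgeLen L α d (some ⟨k, lx⟩) (some ⟨k', ly⟩)
              = α k lx k - α k' ly k - d k lx := by
            simp [edgeLen, hk]
          have h4 : r k' ly + α k' ly k ≤ innerMax L α (idOrder L) Set.univ r k lx :=
            le_innerMax₂ (Ne.symm hk) (Set.mem_univ _)
          have h1 := hcon' k lx
          simp only [hp, Option.elim]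
          rw [hE]; linarith
    have hnext : ∀ j : Fin n, nextIdx j = j + 1 := by
      intro j
      apply Fin.ext
      rw [Fin.add_def]
      simp [nextIdx, Fin.val_one', Nat.mod_eq_of_lt hn1]
    have hnej : ∀ j : Fin n, v j ≠ v (nextIdx j) := by
      intro j h
      have h2 := hv h
      have h3 : j.val = (j.val + 1) % n := congrArg Fin.val h2
      rcases Nat.lt_or_ge (j.val + 1) n with h4 | h4
      · rw [Nat.mod_eq_of_lt h4] at h3; omega
      · have h5 : j.val + 1 = n := by omega
        rw [h5, Nat.mod_self] at h3; omega
    have htel : ∑ j, p (v (nextIdx j)) = ∑ j, p (v j) := by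
      rw [Finset.sum_congr rfl fun j _ => by rw [hnext j]]
      exact Equiv.sum_comp (Equiv.addRight (1 : Fin n)) (fun j => p (v j))
    have hsum : (0:ℝ) = ∑ j, (p (v (nextIdx j)) - p (v j)) := by
      rw [Finset.sum_sub_distrib, htel, sub_self]
    rw [hsum]
    apply Finset.sum_le_sum
    intro j _
    have h := key (v j) (v (nextIdx j)) (hnej j)
    linarith
  · intro H
    classical
    refine ⟨hd, fun _ _ h => absurd (Set.mem_univ _) h, ?_⟩
    set E := edgeLen L α d with hEdef
    -- circuit bound in list form
    have cyc : ∀ (c : List (Option (User L))) (hc : c ≠ []), c.Nodup → 2 ≤ c.length →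
        0 ≤ flen E c + E (c.getLast hc) (c.head hc) := by
      intro c hc hnd hlen
      rcases c with _ | ⟨a, t⟩
      · exact absurd rfl hc
      have hinj : Function.Injective fun j : Fin (a :: t).length => (a :: t).get j :=
        List.nodup_iff_injective_get.1 hnd
      have H0 := H (a :: t).length (by simpa using hlen) _ hinj
      refine le_trans H0 (le_of_eq ?_)
      show ∑ j : Fin (t.length + 1), E ((a :: t).get j) ((a :: t).get (nextIdx j)) = _
      rw [Fin.sum_univ_castSucc]
      have hterm : ∀ j : Fin t.length,
          E ((a :: t).get ((Fin.castSucc j) : Fin (t.length + 1)))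
            ((a :: t).get (nextIdx (Fin.castSucc j)))
          = E ((a :: t).get j.castSucc) ((a :: t).get j.succ) := by
        intro j
        have h1 : nextIdx ((Fin.castSucc j) : Fin (t.length + 1)) = j.succ := by
          apply Fin.ext
          simp [nextIdx, Nat.mod_eq_of_lt (by omega : (j : ℕ) + 1 < t.length + 1)]
        rw [h1]
      rw [Finset.sum_congr rfl fun j _ => hterm j, sum_flen]
      congr 1
      have h2 : nextIdx (Fin.last t.length) = (0 : Fin (t.length + 1)) := by
        apply Fin.ext; simp [nextIdx]
      rw [h2]
      have h3 : (a :: t).get (Fin.last t.length) = (a :: t).getLast hc := by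
        simp [List.getLast_eq_getElem, List.get_eq_getElem]
      rw [h3]; rfl
    -- path machinery
    let PL : User L → Set ℝ := fun u =>
      {x | ∃ c : List (User L), c.Nodup ∧ c.getLast? = some u ∧ x = flen E (c.map some)}
    have hmem0 : ∀ u, (0:ℝ) ∈ PL u := by
      intro u
      exact ⟨[u], by simp, by simp, by simp [flen]⟩
    have hfin : ∀ u, (PL u).Finite := by
      intro u
      have h1 : {c : List (User L) | c.Nodup}.Finite := by
        apply (List.finite_length_le (User L) (Fintype.card (User L))).subset
        intro c hc
        exact hc.length_le_card
      apply (h1.image (fun c => flen E (c.map some))).subset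
      rintro x ⟨c, h1', h2, rfl⟩
      exact ⟨c, h1', rfl⟩
    set p : User L → ℝ := fun u => sInf (PL u) with hpdef
    have hp_mem : ∀ u, p u ∈ PL u := fun u => Set.Nonempty.csInf_mem ⟨0, hmem0 u⟩ (hfin u)
    have hp_le : ∀ u x, x ∈ PL u → p u ≤ x := fun u x hx => csInf_le (hfin u).bddBelow hx
    have P1 : ∀ u, p u ≤ 0 := fun u => hp_le u 0 (hmem0 u)
    have P2 : ∀ u : User L, 0 ≤ p u + E (some u) none := by
      intro u
      obtain ⟨c, hnd, hlast, hx⟩ := hp_mem u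
      rcases c with _ | ⟨a, t⟩
      · simp at hlast
      have hcne : (a :: t) ≠ [] := by simp
      have hu : (a :: t).getLast hcne = u := by
        rw [List.getLast?_eq_getLast_of_ne_nil hcne] at hlast
        exact Option.some.inj hlast
      have hmapne : ((a :: t).map some : List (Option (User L))) ≠ [] := by simp
      have hcyc := cyc (none :: (a :: t).map some) (by simp)
        (by
          refine List.nodup_cons.2 ⟨by simp, ?_⟩
          exact hnd.map (Option.some_injective _))
        (by simp)
      have hgl : (none :: (a :: t).map some).getLast (by simp) = some u := by
        rw [List.getLast_cons hmapne, List.getLast_map]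
        exact congrArg some hu
      rw [hgl] at hcyc
      have hflen : flen E (none :: (a :: t).map some) = flen E ((a :: t).map some) := by
        show flen E (none :: some a :: t.map some) = _
        rw [flen_cons_cons]
        have : E none (some a) = 0 := rfl
        rw [this, zero_add]
        rfl
      rw [hflen] at hcyc
      have hhd : (none :: (a :: t).map some).head (by simp) = none := rfl
      rw [hhd] at hcyc
      rw [hx]
      exact hcyc
    have P3 : ∀ u w : User L, u ≠ w → p w ≤ p u + E (some u) (some w) := by
      intro u w huw
      obtain ⟨c, hnd, hlast, hx⟩ := hp_mem u
      rcases c with _ | ⟨a, t⟩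
      · simp at hlast
      have hcne : (a :: t) ≠ [] := by simp
      have hu : (a :: t).getLast hcne = u := by
        rw [List.getLast?_eq_getLast_of_ne_nil hcne] at hlast
        exact Option.some.inj hlast
      by_cases hw : w ∈ a :: t
      · obtain ⟨l₁, l₂, hsplit⟩ := List.append_of_mem hw
        have hpre : (l₁ ++ [w]).Sublist (a :: t) := by
          rw [hsplit]
          apply List.Sublist.append_left
          exact (List.nil_sublist l₂).cons₂ w
        have hnd1 : (l₁ ++ [w]).Nodup := hnd.sublist hpre
        have hpw : p w ≤ flen E ((l₁ ++ [w]).map some) :=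
          hp_le w _ ⟨l₁ ++ [w], hnd1, by simp, rfl⟩
        have hl₂ : l₂ ≠ [] := by
          rintro rfl
          apply huw
          have h5 := hlast
          rw [hsplit] at h5
          rw [List.getLast?_concat] at h5
          exact (Option.some.inj h5).symm
        have hsub2 : (w :: l₂).Sublist (a :: t) := by
          rw [hsplit]; exact List.sublist_append_right _ _
        have hnd2 : ((w :: l₂).map some).Nodup :=
          (hnd.sublist hsub2).map (Option.some_injective _)
        have hlen2 : 2 ≤ ((w :: l₂).map some).length := by
          rcases l₂ with _ | ⟨b, l₂'⟩
          · exact absurd rfl hl₂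
          · simp
        have hcyc := cyc ((w :: l₂).map some) (by simp) hnd2 hlen2
        have h6 : (w :: l₂).getLast (by simp) = u := by
          have h7 := hlast
          rw [hsplit, List.getLast?_eq_getLast_of_ne_nil (by simp)] at h7
          rw [List.getLast_append_of_ne_nil (l := l₁) (l' := w :: l₂) _ (by simp)] at h7
          exact Option.some.inj h7
        have hgl2 : ((w :: l₂).map some).getLast (by simp) = some u := by
          rw [List.getLast_map]
          exact congrArg some h6
        have hhd2 : ((w :: l₂).map some).head (by simp) = some w := rfl
        rw [hgl2, hhd2] at hcyc
        have hsp : flen E ((a :: t).map some)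
            = flen E ((l₁ ++ [w]).map some) + flen E ((w :: l₂).map some) := by
          conv_lhs => rw [hsplit]
          rw [List.map_append, List.map_cons, flen_split]
          congr 2
          simp
        rw [hx, hsp]
        linarith
      · have hnd1 : ((a :: t) ++ [w]).Nodup := by
          rw [List.nodup_append]
          exact ⟨hnd, List.nodup_singleton _, by intro x hx y hy h; simp at hy; subst hy; subst h; exact hw hx⟩
        have hflen : flen E (((a :: t) ++ [w]).map some)
            = flen E ((a :: t).map some) + E (some u) (some w) := by
          rw [List.map_append]
          show flen E ((some a :: t.map some) ++ [some w]) = _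
          rw [flen_concat]
          congr 2
          show ((a :: t).map some).getLast (by simp) = some u
          rw [List.getLast_map]
          exact congrArg some hu
        have hpw : p w ≤ flen E ((a :: t).map some) + E (some u) (some w) := by
          rw [← hflen]
          exact hp_le w _ ⟨(a :: t) ++ [w], hnd1, List.getLast?_concat, rfl⟩
        rw [hx]
        exact hpw
    -- assemble the power allocation
    refine ⟨fun k l => p ⟨k, l⟩, fun k l _ => P1 ⟨k, l⟩, ?_⟩
    intro k l _
    simp only [idOrder, Equiv.refl_apply]
    have hsuff : innerMax L α (idOrder L) Set.univ (fun k l => p ⟨k, l⟩) k l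
        ≤ p ⟨k, l⟩ + α k l k - d k l := by
      apply innerMax_le
      · have h1 := P2 ⟨k, l⟩
        have hE : E (some ⟨k, l⟩) none = α k l k - d k l := rfl
        rw [hE] at h1
        linarith
      · intro l' hl' _
        simp only [idOrder, Equiv.refl_apply]
        have hne : (⟨k, l⟩ : User L) ≠ ⟨k, l'⟩ := by
          intro h
          have h2 := (Sigma.mk.inj_iff.mp h).2
          exact absurd (eq_of_heq h2).symm (ne_of_lt hl')
        have h3 := P3 ⟨k, l⟩ ⟨k, l'⟩ hne
        have hE : E (some ⟨k, l⟩) (some ⟨k, l'⟩) = α k l k - α k l' k - d k l := by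
          show edgeLen L α d _ _ = _
          simp [edgeLen, Nat.not_lt.2 (le_of_lt hl')]
        rw [hE] at h3
        linarith
      · intro j lj hj _
        have hne : (⟨k, l⟩ : User L) ≠ ⟨j, lj⟩ := by
          intro h
          exact hj (congrArg Sigma.fst h).symm
        have h3 := P3 ⟨k, l⟩ ⟨j, lj⟩ hne
        have hE : E (some ⟨k, l⟩) (some ⟨j, lj⟩) = α k l k - α j lj k - d k l := by
          show edgeLen L α d _ _ = _
          simp [edgeLen, Ne.symm hj]
        rw [hE] at h3
        linarith
    linarith [hsuff]
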